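/- Let I₁ be the modified Bessel function of the first kind of order one. There exists a constant C > 0 such that for every ξ ≠ 0: (i) ∫₀¹ |I₁(|ξ|r)|² r dr ≤ C · min{1, |ξ|^{−1}} · (I₁(|ξ|))²; (ii) ∫₀¹ |(d/dr)(r I₁(|ξ|r))|² (1/r) dr ≤ C · max{1, |ξ|} · (I₁(|ξ|))²; (iii) ∫₀¹ |𝓛(I₁(|ξ|·))(r)|² r dr ≤ C · min{1, |ξ|^{−1}} · ξ⁴ · (I₁(|ξ|))²; (iv) ∫₀¹ |(d/dr)(r · 𝓛(I₁(|ξ|·))(r))|² (1/r) dr ≤ C · max{1, |ξ|} · ξ⁴ · (I₁(|ξ|))². -/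

import Mathlib

open MeasureTheory Set

/-- The operator `(𝓛 g)(r) = g''(r) + g'(r)/r − g(r)/r²`. -/
noncomputable def Lop (g : ℝ → ℂ) : ℝ → ℂ := fun r =>
  deriv (deriv g) r + deriv g r / (r : ℂ) - g r / (r : ℂ) ^ 2

/-- The modified Bessel function of the first kind of order one,
`I₁(x) = Σ_{k=0}^∞ (1/(k!·(k+1)!)) (x/2)^{2k+1}`. -/
noncomputable def besselI1 (x : ℝ) : ℝ :=
  ∑' k : ℕ, (1 / ((Nat.factorial k : ℝ) * (Nat.factorial (k + 1) : ℝ))) * (x / 2) ^ (2 * k + 1)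

lemma two_mul_add_three_le (k : ℕ) : (2*(k:ℝ)+3) ≤ 4 * 2^k := by
  induction k with
  | zero => norm_num
  | succ n ih =>
    rw [pow_succ]
    push_cast; push_cast at ih
    nlinarith [pow_nonneg (by norm_num : (0:ℝ) ≤ 2) n]

lemma sq_two_mul_add_three_le (k : ℕ) : (2*(k:ℝ)+3)^2 ≤ 16 * 4^k := by
  have h := two_mul_add_three_le k
  have h2 : ((4:ℝ))^k = 2^k * 2^k := by rw [← mul_pow]; norm_num
  nlinarith [pow_nonneg (by norm_num : (0:ℝ) ≤ 2) k]

lemma summable_master {z : ℝ} (hz : 1 ≤ z) :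
    Summable (fun k : ℕ => (2*(k:ℝ)+3)^2 / (Nat.factorial k : ℝ) * z^(2*k+1)) := by
  have h0 : (0:ℝ) < z := lt_of_lt_of_le one_pos hz
  have hg : Summable (fun k : ℕ => 16 * z * ((4*z^2)^k / (Nat.factorial k : ℝ))) :=
    (Real.summable_pow_div_factorial (4*z^2)).mul_left _
  apply Summable.of_nonneg_of_le _ _ hg
  · intro k; positivity
  · intro k
    have h1 : (2*(k:ℝ)+3)^2 ≤ 16 * 4^k := sq_two_mul_add_three_le k
    have h3 : (0:ℝ) < (Nat.factorial k : ℝ) := by exact_mod_cast Nat.factorial_pos k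
    have h2 : z^(2*k+1) = z * (z^2)^k := by rw [← pow_mul]; ring
    have h4 : ((4:ℝ)*z^2)^k = 4^k * (z^2)^k := mul_pow _ _ _
    rw [h2, h4, div_mul_eq_mul_div, div_le_iff₀ h3]
    have h6 : 16*z*(4^k*(z^2)^k / (Nat.factorial k : ℝ))*(Nat.factorial k : ℝ)
        = 16*z*(4^k*(z^2)^k) := by field_simp
    rw [h6]
    have h5 : (0:ℝ) ≤ (z^2)^k := pow_nonneg (sq_nonneg z) k
    nlinarith [mul_le_mul_of_nonneg_right h1 (mul_nonneg (le_of_lt h0) h5)]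

lemma summable_coeff_pow {A : ℕ → ℝ} {e : ℕ → ℕ}
    (hA : ∀ k, |A k| ≤ (2*(k:ℝ)+3)^2 / (Nat.factorial k : ℝ)) (he : ∀ k, e k ≤ 2*k+1) (x : ℝ) :
    Summable (fun k : ℕ => A k * x ^ (e k)) := by
  rw [← summable_abs_iff]
  have hg : Summable (fun k : ℕ => (2*(k:ℝ)+3)^2 / (Nat.factorial k : ℝ) * (1+|x|)^(2*k+1)) :=
    summable_master (by simp [abs_nonneg])
  apply Summable.of_nonneg_of_le (fun k => abs_nonneg _) _ hg
  intro k
  rw [abs_mul, abs_pow]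
  have h1 : |x| ^ (e k) ≤ (1+|x|)^(2*k+1) := by
    calc |x| ^ (e k) ≤ (1+|x|) ^ (e k) := by
          apply pow_le_pow_left₀ (abs_nonneg x); linarith
      _ ≤ (1+|x|)^(2*k+1) := by
          apply pow_le_pow_right₀ (by linarith [abs_nonneg x]) (he k)
  exact mul_le_mul (hA k) h1 (by positivity) (by positivity)

lemma hasDerivAt_series {A : ℕ → ℝ} {n : ℕ → ℕ}
    (hA : ∀ k, |A k| * ((n k : ℝ) + 1) ≤ (2*(k:ℝ)+3)^2 / (Nat.factorial k : ℝ))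
    (hn : ∀ k, n k ≤ 2*k+1) (x : ℝ) :
    HasDerivAt (fun y : ℝ => ∑' k : ℕ, A k * (y/2)^(n k))
      (∑' k : ℕ, A k * (n k : ℝ) * (x/2)^(n k - 1) / 2) x := by
  have hA' : ∀ k, |A k| ≤ (2*(k:ℝ)+3)^2 / (Nat.factorial k : ℝ) := by
    intro k
    refine le_trans ?_ (hA k)
    nlinarith [abs_nonneg (A k), (Nat.cast_nonneg (n k) : (0:ℝ) ≤ (n k : ℝ))]
  set R : ℝ := |x| + 1 with hR
  have hR0 : (0:ℝ) ≤ R := by rw [hR]; positivity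
  have hzR : (1:ℝ) ≤ 1 + R/2 := by linarith
  have hx : x ∈ Ioo (-R) R := by
    rw [mem_Ioo]
    refine ⟨by linarith [neg_abs_le x], by linarith [le_abs_self x]⟩
  refine hasDerivAt_tsum_of_isPreconnected (u := fun k : ℕ =>
      (2*(k:ℝ)+3)^2 / (Nat.factorial k : ℝ) * (1+R/2)^(2*k+1))
    (g := fun k y => A k * (y/2)^(n k))
    (g' := fun k y => A k * (n k : ℝ) * (y/2)^(n k - 1) / 2)
    (summable_master hzR) (isOpen_Ioo (a := -R) (b := R)) isPreconnected_Ioo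
    (fun k y _ => ?_) (fun k y hy => ?_) hx ?_ hx
  · have h : HasDerivAt (fun y : ℝ => (y/2)^(n k)) ((n k : ℝ) * (y/2)^(n k - 1) * (2⁻¹)) y := by
      simpa using (HasDerivAt.fun_pow ((hasDerivAt_id y).div_const 2) (n k))
    have h2 := h.const_mul (A k)
    refine h2.congr_deriv ?_
    ring
  · have hy2 : |y/2| ≤ 1 + R/2 := by
      rw [abs_div]
      simp only [mem_Ioo] at hy
      have h5 : |y| ≤ R := by
        rw [abs_le]; exact ⟨by linarith [hy.1], by linarith [hy.2]⟩
      rw [abs_of_pos (by norm_num : (0:ℝ) < 2)]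
      have := div_le_div_of_nonneg_right (c := 2) h5 (by norm_num)
      linarith
    have h1 : ‖A k * (n k : ℝ) * (y/2)^(n k - 1) / 2‖ ≤ |A k| * (n k : ℝ) * (1+R/2)^(n k - 1) := by
      rw [norm_div, norm_mul, norm_mul]
      simp only [Real.norm_eq_abs]
      rw [abs_pow]
      have h2 : |y/2|^(n k - 1) ≤ (1+R/2)^(n k - 1) := pow_le_pow_left₀ (abs_nonneg _) hy2 _
      have h3 : |((n k : ℝ))| = (n k : ℝ) := abs_of_nonneg (Nat.cast_nonneg _)
      rw [h3, abs_of_pos (by norm_num : (0:ℝ) < 2)]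
      calc |A k| * (n k : ℝ) * |y/2|^(n k - 1) / 2 ≤ |A k| * (n k : ℝ) * |y/2|^(n k - 1) := by
            have : (0:ℝ) ≤ |A k| * (n k : ℝ) * |y/2|^(n k - 1) := by positivity
            linarith
        _ ≤ |A k| * (n k : ℝ) * (1+R/2)^(n k - 1) := by
            apply mul_le_mul_of_nonneg_left h2; positivity
    refine h1.trans ?_
    have h4 : (1+R/2:ℝ)^(n k - 1) ≤ (1+R/2)^(2*k+1) := by
      apply pow_le_pow_right₀ hzR
      have := hn k
      omega
    calc |A k| * (n k:ℝ) * (1+R/2)^(n k - 1) ≤ (|A k| * ((n k:ℝ)+1)) * (1+R/2)^(2*k+1) := by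
          apply mul_le_mul _ h4 (by positivity) (by positivity)
          nlinarith [abs_nonneg (A k)]
      _ ≤ (2*(k:ℝ)+3)^2 / (Nat.factorial k : ℝ) * (1+R/2)^(2*k+1) := by
          apply mul_le_mul_of_nonneg_right (hA k) (by positivity)
  · exact summable_coeff_pow hA' hn (x/2)

noncomputable def besselI0 (x : ℝ) : ℝ :=
  ∑' k : ℕ, (1 / ((Nat.factorial k : ℝ) * (Nat.factorial k : ℝ))) * (x / 2) ^ (2 * k)

noncomputable def I1d (x : ℝ) : ℝ :=
  ∑' k : ℕ, (1 / ((Nat.factorial k : ℝ) * (Nat.factorial (k + 1) : ℝ)) * (2*(k:ℝ)+1) / 2) * (x / 2) ^ (2 * k)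

noncomputable def I1dd (x : ℝ) : ℝ :=
  ∑' k : ℕ, ((1 / ((Nat.factorial k : ℝ) * (Nat.factorial (k + 1) : ℝ)) * (2*(k:ℝ)+1) / 2) * (2*(k:ℝ)) / 2) * (x / 2) ^ (2 * k - 1)

lemma fact_pos (k : ℕ) : (0:ℝ) < (Nat.factorial k : ℝ) := by exact_mod_cast Nat.factorial_pos k

lemma fact_one_le (k : ℕ) : (1:ℝ) ≤ (Nat.factorial k : ℝ) := by
  exact_mod_cast Nat.one_le_iff_ne_zero.2 (Nat.factorial_ne_zero k)

lemma hA_I1 : ∀ k : ℕ, |1 / ((Nat.factorial k : ℝ) * (Nat.factorial (k + 1) : ℝ))| *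
    (((2*k+1 : ℕ) : ℝ) + 1) ≤ (2*(k:ℝ)+3)^2 / (Nat.factorial k : ℝ) := by
  intro k
  have hk := fact_pos k
  have hk1 := fact_one_le (k+1)
  rw [abs_of_nonneg (by positivity), le_div_iff₀ hk]
  push_cast
  have e : 1 / ((Nat.factorial k : ℝ) * (Nat.factorial (k+1) : ℝ)) * (2*(k:ℝ)+1+1) * (Nat.factorial k : ℝ)
      = (2*(k:ℝ)+2) / (Nat.factorial (k+1) : ℝ) := by
    field_simp
    ring
  rw [e]
  have h2 : (2*(k:ℝ)+2) / (Nat.factorial (k+1) : ℝ) ≤ 2*(k:ℝ)+2 := by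
    rw [div_le_iff₀ (by linarith)]
    nlinarith [Nat.cast_nonneg (k:ℕ) (α := ℝ)]
  nlinarith [Nat.cast_nonneg (k:ℕ) (α := ℝ)]

lemma hA_I1d : ∀ k : ℕ, |1 / ((Nat.factorial k : ℝ) * (Nat.factorial (k + 1) : ℝ)) * (2*(k:ℝ)+1) / 2| *
    (((2*k : ℕ) : ℝ) + 1) ≤ (2*(k:ℝ)+3)^2 / (Nat.factorial k : ℝ) := by
  intro k
  have hk := fact_pos k
  have hk1 := fact_one_le (k+1)
  rw [abs_of_nonneg (by positivity), le_div_iff₀ hk]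
  push_cast
  have e : 1 / ((Nat.factorial k : ℝ) * (Nat.factorial (k+1) : ℝ)) * (2*(k:ℝ)+1) / 2 * (2*(k:ℝ)+1) * (Nat.factorial k : ℝ)
      = ((2*(k:ℝ)+1)^2/2) / (Nat.factorial (k+1) : ℝ) := by
    field_simp
  rw [e]
  have h2 : ((2*(k:ℝ)+1)^2/2) / (Nat.factorial (k+1) : ℝ) ≤ (2*(k:ℝ)+1)^2/2 := by
    rw [div_le_iff₀ (by linarith)]
    nlinarith [Nat.cast_nonneg (k:ℕ) (α := ℝ), sq_nonneg (2*(k:ℝ)+1)]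
  nlinarith [Nat.cast_nonneg (k:ℕ) (α := ℝ), sq_nonneg (2*(k:ℝ)+1)]

lemma hA_I0 : ∀ k : ℕ, |1 / ((Nat.factorial k : ℝ) * (Nat.factorial k : ℝ))| *
    (((2*k : ℕ) : ℝ) + 1) ≤ (2*(k:ℝ)+3)^2 / (Nat.factorial k : ℝ) := by
  intro k
  have hk := fact_pos k
  have hk1 := fact_one_le k
  rw [abs_of_nonneg (by positivity), le_div_iff₀ hk]
  push_cast
  have e : 1 / ((Nat.factorial k : ℝ) * (Nat.factorial k : ℝ)) * (2*(k:ℝ)+1) * (Nat.factorial k : ℝ)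
      = (2*(k:ℝ)+1) / (Nat.factorial k : ℝ) := by
    field_simp
  rw [e]
  have h2 : (2*(k:ℝ)+1) / (Nat.factorial k : ℝ) ≤ 2*(k:ℝ)+1 := by
    rw [div_le_iff₀ (by linarith)]
    nlinarith [Nat.cast_nonneg (k:ℕ) (α := ℝ)]
  nlinarith [Nat.cast_nonneg (k:ℕ) (α := ℝ)]

lemma abs_le_of_hA {A c d : ℝ} (h : |A| * c ≤ d) (hc : 1 ≤ c) : |A| ≤ d :=
  le_trans (le_mul_of_one_le_right (abs_nonneg _) hc) h

lemma hasDerivAt_besselI1 (x : ℝ) : HasDerivAt besselI1 (I1d x) x := by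
  have h := hasDerivAt_series
    (A := fun k : ℕ => 1 / ((Nat.factorial k : ℝ) * (Nat.factorial (k + 1) : ℝ)))
    (n := fun k => 2*k+1) hA_I1 (fun k => le_refl _) x
  have e2 : I1d x = ∑' k : ℕ, (1 / ((Nat.factorial k : ℝ) * (Nat.factorial (k+1) : ℝ))) *
      ((2*k+1 : ℕ) : ℝ) * (x/2)^(2*k+1-1)/2 := by
    apply tsum_congr; intro k
    have e3 : 2*k+1-1 = 2*k := by omega
    rw [e3]; push_cast; ring
  rw [show besselI1 = (fun y : ℝ => ∑' k : ℕ,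
    (1 / ((Nat.factorial k : ℝ) * (Nat.factorial (k + 1) : ℝ))) * (y/2)^(2*k+1)) from rfl, e2]
  exact h

lemma hasDerivAt_I1d (x : ℝ) : HasDerivAt I1d (I1dd x) x := by
  have h := hasDerivAt_series
    (A := fun k : ℕ => 1 / ((Nat.factorial k : ℝ) * (Nat.factorial (k + 1) : ℝ)) * (2*(k:ℝ)+1) / 2)
    (n := fun k => 2*k) hA_I1d (fun k => by show 2*k ≤ 2*k+1; omega) x
  have e2 : I1dd x = ∑' k : ℕ, (1 / ((Nat.factorial k : ℝ) * (Nat.factorial (k+1) : ℝ)) * (2*(k:ℝ)+1) / 2) *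
      ((2*k : ℕ) : ℝ) * (x/2)^(2*k-1)/2 := by
    apply tsum_congr; intro k
    push_cast; ring
  rw [show I1d = (fun y : ℝ => ∑' k : ℕ,
    (1 / ((Nat.factorial k : ℝ) * (Nat.factorial (k + 1) : ℝ)) * (2*(k:ℝ)+1) / 2) * (y/2)^(2*k)) from rfl, e2]
  exact h

lemma continuous_besselI1 : Continuous besselI1 :=
  continuous_iff_continuousAt.2 fun x => (hasDerivAt_besselI1 x).continuousAt

lemma hasDerivAt_besselI0 (x : ℝ) : HasDerivAt besselI0
    (∑' k : ℕ, (1 / ((Nat.factorial k : ℝ) * (Nat.factorial k : ℝ))) * ((2*k : ℕ) : ℝ) * (x/2)^(2*k-1)/2) x := by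
  have h := hasDerivAt_series
    (A := fun k : ℕ => 1 / ((Nat.factorial k : ℝ) * (Nat.factorial k : ℝ)))
    (n := fun k => 2*k) hA_I0 (fun k => by show 2*k ≤ 2*k+1; omega) x
  exact h

lemma continuous_besselI0 : Continuous besselI0 :=
  continuous_iff_continuousAt.2 fun x => (hasDerivAt_besselI0 x).continuousAt

lemma summable_I1 (y : ℝ) :
    Summable (fun k : ℕ => (1 / ((Nat.factorial k : ℝ) * (Nat.factorial (k + 1) : ℝ))) * y ^ (2*k+1)) :=
  summable_coeff_pow (fun k => abs_le_of_hA (hA_I1 k) (by push_cast; linarith [Nat.cast_nonneg (k:ℕ) (α := ℝ)]))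
    (fun k => le_rfl) y

lemma summable_I1d (y : ℝ) :
    Summable (fun k : ℕ => (1 / ((Nat.factorial k : ℝ) * (Nat.factorial (k + 1) : ℝ)) * (2*(k:ℝ)+1) / 2) * y ^ (2*k)) :=
  summable_coeff_pow (fun k => abs_le_of_hA (hA_I1d k) (by push_cast; linarith [Nat.cast_nonneg (k:ℕ) (α := ℝ)]))
    (fun k => by show 2*k ≤ 2*k+1; omega) y

lemma summable_I0 (y : ℝ) :
    Summable (fun k : ℕ => (1 / ((Nat.factorial k : ℝ) * (Nat.factorial k : ℝ))) * y ^ (2*k)) :=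
  summable_coeff_pow (fun k => abs_le_of_hA (hA_I0 k) (by push_cast; linarith [Nat.cast_nonneg (k:ℕ) (α := ℝ)]))
    (fun k => by show 2*k ≤ 2*k+1; omega) y

lemma summable_I1dd (y : ℝ) :
    Summable (fun k : ℕ => ((1 / ((Nat.factorial k : ℝ) * (Nat.factorial (k + 1) : ℝ)) * (2*(k:ℝ)+1) / 2) * (2*(k:ℝ)) / 2) * y ^ (2*k-1)) := by
  apply summable_coeff_pow (e := fun k => 2*k-1) _ (fun k => by show 2*k-1 ≤ 2*k+1; omega) y
  intro k
  refine le_trans ?_ (hA_I1d k)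
  have h1 : |1 / ((Nat.factorial k : ℝ) * (Nat.factorial (k + 1) : ℝ)) * (2*(k:ℝ)+1) / 2 * (2*(k:ℝ)) / 2|
      = |1 / ((Nat.factorial k : ℝ) * (Nat.factorial (k + 1) : ℝ)) * (2*(k:ℝ)+1) / 2| * ((2*(k:ℝ))/2) := by
    rw [abs_div, abs_mul, abs_of_nonneg (by positivity : (0:ℝ) ≤ 2*(k:ℝ)), abs_of_pos (by norm_num : (0:ℝ) < 2)]
    ring
  rw [h1]
  apply mul_le_mul_of_nonneg_left _ (abs_nonneg _)
  push_cast
  linarith [Nat.cast_nonneg (k:ℕ) (α := ℝ)]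

lemma fact_succ_cast (k : ℕ) : ((Nat.factorial (k+1) : ℝ)) = ((k:ℝ)+1) * (Nat.factorial k : ℝ) := by
  rw [Nat.factorial_succ]; push_cast; ring

lemma id1 (x : ℝ) : besselI1 x + x * I1d x = x * besselI0 x := by
  unfold besselI1 I1d besselI0
  rw [← tsum_mul_left (a := x), ← tsum_mul_left (a := x)]
  rw [← Summable.tsum_add (summable_I1 (x/2)) ((summable_I1d (x/2)).mul_left x)]
  apply tsum_congr
  intro k
  have hk := fact_pos k
  have hk1 := fact_pos (k+1)
  rw [pow_succ, fact_succ_cast k]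
  field_simp
  ring

lemma id2 (x : ℝ) : x^2 * I1dd x + x * I1d x - besselI1 x = x^2 * besselI1 x := by
  unfold besselI1 I1d I1dd
  rw [← tsum_mul_left (a := x^2), ← tsum_mul_left (a := x), ← tsum_mul_left (a := x^2)]
  rw [← Summable.tsum_add ((summable_I1dd (x/2)).mul_left (x^2)) ((summable_I1d (x/2)).mul_left x)]
  rw [← Summable.tsum_sub (((summable_I1dd (x/2)).mul_left (x^2)).add ((summable_I1d (x/2)).mul_left x)) (summable_I1 (x/2))]
  set c : ℕ → ℝ := fun k =>
    x^2 * (((1 / ((Nat.factorial k : ℝ) * (Nat.factorial (k + 1) : ℝ)) * (2*(k:ℝ)+1) / 2) * (2*(k:ℝ)) / 2) * (x/2)^(2*k-1))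
    + x * ((1 / ((Nat.factorial k : ℝ) * (Nat.factorial (k + 1) : ℝ)) * (2*(k:ℝ)+1) / 2) * (x/2)^(2*k))
    - (1 / ((Nat.factorial k : ℝ) * (Nat.factorial (k + 1) : ℝ))) * (x/2)^(2*k+1) with hc
  have hsc : Summable c := by
    apply Summable.sub
    · exact ((summable_I1dd (x/2)).mul_left (x^2)).add ((summable_I1d (x/2)).mul_left x)
    · exact summable_I1 (x/2)
  rw [Summable.tsum_eq_zero_add hsc]
  have hc0 : c 0 = 0 := by
    simp only [hc]
    norm_num [Nat.factorial]
    ring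
  rw [hc0, zero_add]
  apply tsum_congr
  intro k
  have hk := fact_pos k
  have hk1 := fact_pos (k+1)
  have hk2 := fact_pos (k+2)
  have e1 : 2*(k+1)-1 = 2*k+1 := by omega
  have e2 : 2*(k+1) = 2*k+2 := by omega
  have e3 : 2*(k+1)+1 = 2*k+3 := by omega
  simp only [hc, e1, e2, e3]
  rw [fact_succ_cast (k+1), fact_succ_cast k]
  push_cast
  rw [show (2:ℕ)*k+2 = (2*k+1)+1 from by omega, show (2:ℕ)*k+3 = ((2*k+1)+1)+1 from by omega]
  rw [pow_succ, pow_succ]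
  field_simp
  ring

lemma ode (a r : ℝ) (hr : r ≠ 0) :
    a^2 * I1dd (a*r) + a * I1d (a*r) / r - besselI1 (a*r) / r^2 = a^2 * besselI1 (a*r) := by
  have h := id2 (a*r)
  have hr2 : r^2 ≠ 0 := pow_ne_zero _ hr
  field_simp
  linear_combination h

lemma besselI1_nonneg {x : ℝ} (hx : 0 ≤ x) : 0 ≤ besselI1 x :=
  tsum_nonneg fun k => by positivity

lemma besselI0_nonneg {x : ℝ} (hx : 0 ≤ x) : 0 ≤ besselI0 x :=
  tsum_nonneg fun k => by positivity

lemma besselI1_mono {x y : ℝ} (hx : 0 ≤ x) (hxy : x ≤ y) : besselI1 x ≤ besselI1 y := by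
  unfold besselI1
  apply Summable.tsum_le_tsum _ (summable_I1 (x/2)) (summable_I1 (y/2))
  intro k
  have h := pow_le_pow_left₀ (by linarith : (0:ℝ) ≤ x/2) (by linarith : x/2 ≤ y/2) (2*k+1)
  have h2 : (0:ℝ) ≤ 1 / ((Nat.factorial k : ℝ) * (Nat.factorial (k+1) : ℝ)) := by positivity
  exact mul_le_mul_of_nonneg_left h h2

lemma besselI0_mono {x y : ℝ} (hx : 0 ≤ x) (hxy : x ≤ y) : besselI0 x ≤ besselI0 y := by
  unfold besselI0
  apply Summable.tsum_le_tsum _ (summable_I0 (x/2)) (summable_I0 (y/2))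
  intro k
  have h := pow_le_pow_left₀ (by linarith : (0:ℝ) ≤ x/2) (by linarith : x/2 ≤ y/2) (2*k)
  have h2 : (0:ℝ) ≤ 1 / ((Nat.factorial k : ℝ) * (Nat.factorial k : ℝ)) := by positivity
  exact mul_le_mul_of_nonneg_left h h2

lemma first_term_le {x : ℝ} (hx : 0 ≤ x) : x/2 ≤ besselI1 x := by
  unfold besselI1
  rw [Summable.tsum_eq_zero_add (summable_I1 (x/2))]
  have h1 : (1/((Nat.factorial 0 : ℝ)*(Nat.factorial (0+1) : ℝ)))*(x/2)^(2*0+1) = x/2 := by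
    norm_num [Nat.factorial]
  have h2 : 0 ≤ ∑' k : ℕ, (1/((Nat.factorial (k+1) : ℝ)*(Nat.factorial (k+1+1) : ℝ)))*(x/2)^(2*(k+1)+1) :=
    tsum_nonneg fun k => by positivity
  calc x/2 = (1/((Nat.factorial 0 : ℝ)*(Nat.factorial (0+1) : ℝ)))*(x/2)^(2*0+1) := h1.symm
    _ ≤ _ := by exact le_add_of_nonneg_right h2

lemma tail_tsum_le {f : ℕ → ℝ} (hf : Summable f) (h0 : ∀ k, 0 ≤ f k) :
    ∑' k, f (k+1) ≤ ∑' k, f k := by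
  rw [Summable.tsum_eq_zero_add hf]
  linarith [h0 0]

lemma coef_aux {F K : ℝ} (hF : 0 < F) (hK : 0 ≤ K) :
    (1/(((K+1)*F)*((K+1)*F)))^2 ≤ 2*((1/(F*((K+1)*F)))*(1/(((K+1)*F)*((K+2)*((K+1)*F))))) := by
  have h1 : (0:ℝ) < (K+1)*F := by positivity
  rw [div_pow, one_pow]
  have eR : 2*((1/(F*((K+1)*F)))*(1/(((K+1)*F)*((K+2)*((K+1)*F)))))
      = 2/((F*((K+1)*F))*(((K+1)*F)*((K+2)*((K+1)*F)))) := by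
    field_simp
  rw [eR, div_le_div_iff₀ (by positivity) (by positivity)]
  nlinarith [pow_pos hF 4, hK, pow_pos hF 2, pow_pos h1 2, mul_pos hF h1,
    pow_nonneg hK 3, pow_nonneg hK 4, pow_pos hF 3]

lemma besselI0_le {x : ℝ} (hx : 0 < x) : besselI0 x ≤ 4 * max 1 x⁻¹ * besselI1 x := by
  set t : ℕ → ℝ := fun k => (1/((Nat.factorial k : ℝ)*(Nat.factorial (k+1) : ℝ)))*(x/2)^(2*k+1) with ht
  have hts : Summable t := summable_I1 (x/2)
  have htn : ∀ k, 0 ≤ t k := fun k => by rw [ht]; positivity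
  have hts' : Summable (fun k => t (k+1)) := by
    have := hts.comp_injective (add_left_injective 1)
    exact this
  have hI1 : besselI1 x = ∑' k, t k := rfl
  have claim1 : ∀ k : ℕ, (1/((Nat.factorial (k+1) : ℝ)*(Nat.factorial (k+1) : ℝ)))*(x/2)^(2*(k+1))
      ≤ t k + t (k+1) := by
    intro k
    set s : ℝ := (1/((Nat.factorial (k+1) : ℝ)*(Nat.factorial (k+1) : ℝ)))*(x/2)^(2*(k+1)) with hs
    have hsn : 0 ≤ s := by rw [hs]; positivity
    have hs2 : s^2 ≤ 2 * (t k * t (k+1)) := by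
      rw [hs, ht]
      have e1 : (((x:ℝ)/2)^(2*(k+1)))^2 = (x/2)^(2*k+1) * (x/2)^(2*(k+1)+1) := by
        rw [← pow_mul, ← pow_add]
        congr 1
        omega
      have hk := fact_pos k
      have hk1 := fact_pos (k+1)
      have hk2 := fact_pos (k+2)
      have e2 : ((Nat.factorial (k+2) : ℝ)) = ((k:ℝ)+2) * (Nat.factorial (k+1) : ℝ) := by
        rw [Nat.factorial_succ]; push_cast; ring
      have hp : (0:ℝ) ≤ (x/2)^(2*k+1) * (x/2)^(2*(k+1)+1) := by positivity
      rw [mul_pow, e1]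
      have coef : ((1:ℝ)/((Nat.factorial (k+1) : ℝ)*(Nat.factorial (k+1) : ℝ)))^2
          ≤ 2 * ((1/((Nat.factorial k : ℝ)*(Nat.factorial (k+1) : ℝ))) * (1/((Nat.factorial (k+1) : ℝ)*(Nat.factorial (k+2) : ℝ)))) := by
        rw [e2, fact_succ_cast k]
        have h := coef_aux (fact_pos k) (Nat.cast_nonneg k)
        convert h using 1 <;> ring
      calc (1/((Nat.factorial (k+1):ℝ) * (Nat.factorial (k+1):ℝ)))^2 * ((x/2)^(2*k+1) * (x/2)^(2*(k+1)+1))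
          ≤ 2 * ((1/((Nat.factorial k : ℝ)*(Nat.factorial (k+1) : ℝ))) * (1/((Nat.factorial (k+1) : ℝ)*(Nat.factorial (k+2) : ℝ)))) * ((x/2)^(2*k+1) * (x/2)^(2*(k+1)+1)) :=
            mul_le_mul_of_nonneg_right coef hp
        _ = 2 * (1/((Nat.factorial k:ℝ) * (Nat.factorial (k+1):ℝ)) * (x/2)^(2*k+1) * (1/((Nat.factorial (k+1):ℝ) * (Nat.factorial (k+1+1):ℝ)) * (x/2)^(2*(k+1)+1))) := by
            ring
    nlinarith [sq_nonneg (t k - t (k+1)), sq_nonneg (t k + t (k+1)), htn k, htn (k+1), hsn]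
  have h0 : besselI0 x = 1 + ∑' k, (1/((Nat.factorial (k+1) : ℝ)*(Nat.factorial (k+1) : ℝ)))*(x/2)^(2*(k+1)) := by
    unfold besselI0
    rw [Summable.tsum_eq_zero_add (summable_I0 (x/2))]
    norm_num [Nat.factorial]
  have hsum1 : ∑' k, (1/((Nat.factorial (k+1) : ℝ)*(Nat.factorial (k+1) : ℝ)))*(x/2)^(2*(k+1))
      ≤ ∑' k, (t k + t (k+1)) := by
    apply Summable.tsum_le_tsum claim1
    · have := (summable_I0 (x/2)).comp_injective (add_left_injective 1)
      exact this
    · exact hts.add hts'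
  have hsum2 : ∑' k, (t k + t (k+1)) ≤ 2 * besselI1 x := by
    rw [Summable.tsum_add hts hts', hI1]
    have := tail_tsum_le hts htn
    linarith
  have h1le : 1 ≤ x⁻¹ * (2 * besselI1 x) := by
    have := first_term_le (le_of_lt hx)
    rw [inv_mul_eq_div, le_div_iff₀ hx]
    linarith
  have hmax1 : (1:ℝ) ≤ max 1 x⁻¹ := le_max_left _ _
  have hmax2 : x⁻¹ ≤ max 1 x⁻¹ := le_max_right _ _
  have hI1n : 0 ≤ besselI1 x := besselI1_nonneg (le_of_lt hx)
  have hxi : 0 ≤ x⁻¹ := by positivity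
  calc besselI0 x ≤ x⁻¹ * (2 * besselI1 x) + 2 * besselI1 x := by
        rw [h0]; linarith [le_trans hsum1 hsum2]
    _ ≤ max 1 x⁻¹ * (2 * besselI1 x) + max 1 x⁻¹ * (2 * besselI1 x) := by
        have g1 : x⁻¹ * (2 * besselI1 x) ≤ max 1 x⁻¹ * (2 * besselI1 x) :=
          mul_le_mul_of_nonneg_right hmax2 (by linarith)
        have g2 : 2 * besselI1 x ≤ max 1 x⁻¹ * (2 * besselI1 x) := by
          nlinarith
        linarith
    _ = 4 * max 1 x⁻¹ * besselI1 x := by ring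

lemma hasDerivAt_comp_real (a r : ℝ) :
    HasDerivAt (fun s : ℝ => besselI1 (a*s)) (a * I1d (a*r)) r := by
  have h1 : HasDerivAt (fun s : ℝ => a*s) a r := by
    simpa using (hasDerivAt_id r).const_mul a
  have h2 := (hasDerivAt_besselI1 (a*r)).comp r h1
  exact h2.congr_deriv (mul_comm _ _)

lemma hasDerivAt_comp_complex (a r : ℝ) :
    HasDerivAt (fun s : ℝ => ((besselI1 (a*s) : ℝ) : ℂ)) (((a * I1d (a*r) : ℝ) : ℂ)) r :=
  (hasDerivAt_comp_real a r).ofReal_comp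

lemma deriv_comp_complex (a : ℝ) :
    deriv (fun s : ℝ => ((besselI1 (a*s) : ℝ) : ℂ)) = fun r : ℝ => (((a * I1d (a*r) : ℝ) : ℂ)) :=
  funext fun r => (hasDerivAt_comp_complex a r).deriv

lemma hasDerivAt_comp_real' (a r : ℝ) :
    HasDerivAt (fun s : ℝ => a * I1d (a*s)) (a^2 * I1dd (a*r)) r := by
  have h1 : HasDerivAt (fun s : ℝ => a*s) a r := by
    simpa using (hasDerivAt_id r).const_mul a
  have h2 := ((hasDerivAt_I1d (a*r)).comp r h1).const_mul a
  exact h2.congr_deriv (by ring)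

lemma hasDerivAt_comp_complex' (a r : ℝ) :
    HasDerivAt (fun s : ℝ => ((a * I1d (a*s) : ℝ) : ℂ)) (((a^2 * I1dd (a*r) : ℝ) : ℂ)) r :=
  (hasDerivAt_comp_real' a r).ofReal_comp

lemma Lop_eq (a : ℝ) {r : ℝ} (hr : r ≠ 0) :
    Lop (fun s : ℝ => ((besselI1 (a*s) : ℝ) : ℂ)) r = ((a^2 * besselI1 (a*r) : ℝ) : ℂ) := by
  unfold Lop
  rw [deriv_comp_complex a]
  rw [(hasDerivAt_comp_complex' a r).deriv]
  have h := ode a r hr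
  have hrc : (r : ℂ) ≠ 0 := by exact_mod_cast hr
  rw [show ((a^2 * I1dd (a*r) : ℝ) : ℂ) + ((a * I1d (a*r) : ℝ) : ℂ) / (r:ℂ) - ((besselI1 (a*r) : ℝ) : ℂ) / (r:ℂ)^2
      = (((a^2 * I1dd (a*r) + a * I1d (a*r) / r - besselI1 (a*r) / r^2 : ℝ)) : ℂ) from by push_cast; ring]
  rw [h]

lemma integrableOn_cont {f : ℝ → ℝ} (hf : Continuous f) : IntegrableOn f (Ioo (0:ℝ) 1) volume :=
  (hf.integrableOn_Icc (a := 0) (b := 1)).mono_set Ioo_subset_Icc_self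

lemma integral_pow_Ioo (m : ℕ) : ∫ r in Ioo (0:ℝ) 1, r ^ m = 1/((m:ℝ)+1) := by
  rw [← MeasureTheory.integral_Ioc_eq_integral_Ioo,
    ← intervalIntegral.integral_of_le (by norm_num : (0:ℝ) ≤ 1), integral_pow]
  simp

lemma integral_tsum_pow {c : ℕ → ℝ} {e : ℕ → ℕ} (hc : ∀ k, 0 ≤ c k) (hs : Summable c) :
    ∫ r in Ioo (0:ℝ) 1, (∑' k, c k * r ^ (e k)) = ∑' k, c k * (1/((e k : ℝ)+1)) := by
  have hint : ∀ k : ℕ, Integrable (fun r : ℝ => c k * r ^ (e k)) (volume.restrict (Ioo 0 1)) :=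
    fun k => integrableOn_cont (continuous_const.mul (continuous_pow _))
  have key : ∀ k : ℕ, (∫ r in Ioo (0:ℝ) 1, ‖c k * r ^ (e k)‖) = c k * (1/((e k : ℝ)+1)) := by
    intro k
    rw [setIntegral_congr_fun measurableSet_Ioo (g := fun r : ℝ => c k * r ^ (e k))
      (fun r hr => by
        rw [Real.norm_eq_abs, abs_of_nonneg (mul_nonneg (hc k) (pow_nonneg hr.1.le _))])]
    rw [MeasureTheory.integral_const_mul, integral_pow_Ioo]
  have hnorm : Summable (fun k : ℕ => ∫ r in Ioo (0:ℝ) 1, ‖c k * r ^ (e k)‖) := by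
    rw [funext key]
    apply Summable.of_nonneg_of_le _ _ hs
    · intro k; exact mul_nonneg (hc k) (by positivity)
    · intro k
      have h1 : (1:ℝ)/((e k : ℝ)+1) ≤ 1 := by
        rw [div_le_one (by positivity)]
        linarith [Nat.cast_nonneg (e k) (α := ℝ)]
      nlinarith [hc k]
  rw [← MeasureTheory.integral_tsum_of_summable_integral_norm hint hnorm]
  apply tsum_congr
  intro k
  rw [MeasureTheory.integral_const_mul, integral_pow_Ioo]

lemma amgm_aux {a K : ℝ} (ha : 0 < a) (hK : 0 ≤ K) :
    a/(2*K+3) ≤ 1 + a^2/(4*(K+1)*(K+2)) := by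
  have hB : (0:ℝ) < 4*(K+1)*(K+2) := by nlinarith
  rw [div_le_iff₀ (by linarith : (0:ℝ) < 2*K+3),
    show (1 + a^2/(4*(K+1)*(K+2))) = (4*(K+1)*(K+2) + a^2)/(4*(K+1)*(K+2)) from by field_simp,
    div_mul_eq_mul_div, le_div_iff₀ hB]
  nlinarith [sq_nonneg (2*(2*K+3)*a - 4*(K+1)*(K+2)), hK, sq_nonneg K, mul_nonneg hK hK,
    mul_nonneg (mul_nonneg hK hK) hK, mul_nonneg (mul_nonneg (mul_nonneg hK hK) hK) hK]

lemma term_ratio {a : ℝ} (k : ℕ) :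
    (1/((Nat.factorial (k+1) : ℝ)*(Nat.factorial (k+2) : ℝ)))*(a/2)^(2*(k+1)+1)
      = ((1/((Nat.factorial k : ℝ)*(Nat.factorial (k+1) : ℝ)))*(a/2)^(2*k+1)) * (a^2/(4*((k:ℝ)+1)*((k:ℝ)+2))) := by
  have hk := fact_pos k
  have hk1 := fact_pos (k+1)
  rw [fact_succ_cast (k+1), fact_succ_cast k,
    show 2*(k+1)+1 = (2*k+1)+2 from by omega, pow_add]
  have hK : (0:ℝ) ≤ (k:ℝ) := Nat.cast_nonneg k
  field_simp
  ring_nf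
  push_cast
  ring
  try tauto

lemma intI1_le {a : ℝ} (ha : 0 < a) :
    ∫ r in Ioo (0:ℝ) 1, besselI1 (a*r) * r ≤ min 1 a⁻¹ * (2 * besselI1 a) := by
  set t : ℕ → ℝ := fun k => (1/((Nat.factorial k : ℝ)*(Nat.factorial (k+1) : ℝ)))*(a/2)^(2*k+1) with ht
  have hts : Summable t := summable_I1 (a/2)
  have htn : ∀ k, 0 ≤ t k := fun k => by rw [ht]; positivity
  have hts' : Summable (fun k => t (k+1)) := hts.comp_injective (add_left_injective 1)
  have hfun : ∀ r : ℝ, besselI1 (a*r) * r = ∑' k : ℕ, t k * r^(2*k+2) := by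
    intro r
    unfold besselI1
    rw [← tsum_mul_right]
    apply tsum_congr; intro k
    rw [show a*r/2 = (a/2)*r from by ring, mul_pow, ht]
    rw [show 2*k+2 = (2*k+1)+1 from by omega, pow_succ]
    ring
  simp_rw [hfun]
  rw [integral_tsum_pow htn hts]
  have hterm : ∀ k : ℕ, t k * (1/(((2*k+2 : ℕ) : ℝ)+1)) ≤ min 1 a⁻¹ * (t k + t (k+1)) := by
    intro k
    have hK : (0:ℝ) ≤ (k:ℝ) := Nat.cast_nonneg k
    have hcast : (((2*k+2 : ℕ) : ℝ)+1) = 2*(k:ℝ)+3 := by push_cast; ring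
    rw [hcast]
    have hrat : t (k+1) = t k * (a^2/(4*((k:ℝ)+1)*((k:ℝ)+2))) := by
      rw [ht]; exact term_ratio k
    rcases le_total a 1 with hc | hc
    · have hm : min 1 a⁻¹ = 1 := min_eq_left (by simpa using one_le_one_div ha hc)
      rw [hm, one_mul]
      have h1 : t k * (1/(2*(k:ℝ)+3)) ≤ t k := by
        have : (1:ℝ)/(2*(k:ℝ)+3) ≤ 1 := by rw [div_le_one (by linarith)]; linarith
        nlinarith [htn k]
      linarith [htn (k+1)]
    · have hm : min 1 a⁻¹ = a⁻¹ := min_eq_right (inv_le_one_of_one_le₀ hc)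
      rw [hm, hrat]
      have hamgm := amgm_aux ha hK
      have h2 : t k * (a/(2*(k:ℝ)+3)) ≤ t k * (1 + a^2/(4*((k:ℝ)+1)*((k:ℝ)+2))) :=
        mul_le_mul_of_nonneg_left hamgm (htn k)
      have ha' : a⁻¹ * a = 1 := inv_mul_cancel₀ (ne_of_gt ha)
      calc t k * (1/(2*(k:ℝ)+3)) = a⁻¹ * (t k * (a/(2*(k:ℝ)+3))) := by
            field_simp
          _ ≤ a⁻¹ * (t k * (1 + a^2/(4*((k:ℝ)+1)*((k:ℝ)+2)))) :=
            mul_le_mul_of_nonneg_left h2 (by positivity)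
          _ = a⁻¹ * (t k + t k * (a^2/(4*((k:ℝ)+1)*((k:ℝ)+2)))) := by ring
  calc ∑' k : ℕ, t k * (1/(((2*k+2 : ℕ) : ℝ)+1))
      ≤ ∑' k : ℕ, min 1 a⁻¹ * (t k + t (k+1)) := by
        apply Summable.tsum_le_tsum hterm
        · apply Summable.of_nonneg_of_le _ _ hts
          · intro k; positivity
          · intro k
            have : (1:ℝ)/(((2*k+2 : ℕ) : ℝ)+1) ≤ 1 := by
              rw [div_le_one (by positivity)]
              linarith [Nat.cast_nonneg (2*k+2) (α := ℝ)]
            nlinarith [htn k]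
        · exact (hts.add hts').mul_left _
    _ = min 1 a⁻¹ * ∑' k : ℕ, (t k + t (k+1)) := tsum_mul_left
    _ ≤ min 1 a⁻¹ * (2 * besselI1 a) := by
        apply mul_le_mul_of_nonneg_left _ (le_min (by norm_num) (by positivity))
        rw [Summable.tsum_add hts hts']
        have h3 := tail_tsum_le hts htn
        have h4 : besselI1 a = ∑' k, t k := rfl
        rw [h4]
        linarith

lemma intI0_le {a : ℝ} (ha : 0 < a) :
    ∫ r in Ioo (0:ℝ) 1, besselI0 (a*r) * r ≤ a⁻¹ * besselI1 a := by
  set s : ℕ → ℝ := fun k => (1/((Nat.factorial k : ℝ)*(Nat.factorial k : ℝ)))*(a/2)^(2*k) with hs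
  have hss : Summable s := summable_I0 (a/2)
  have hsn : ∀ k, 0 ≤ s k := fun k => by rw [hs]; positivity
  have hfun : ∀ r : ℝ, besselI0 (a*r) * r = ∑' k : ℕ, s k * r^(2*k+1) := by
    intro r
    unfold besselI0
    rw [← tsum_mul_right]
    apply tsum_congr; intro k
    rw [show a*r/2 = (a/2)*r from by ring, mul_pow, hs]
    rw [pow_succ]
    ring
  simp_rw [hfun]
  rw [integral_tsum_pow hsn hss]
  have hterm : ∀ k : ℕ, s k * (1/(((2*k+1 : ℕ) : ℝ)+1))
      = a⁻¹ * ((1/((Nat.factorial k : ℝ)*(Nat.factorial (k+1) : ℝ)))*(a/2)^(2*k+1)) := by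
    intro k
    have hk := fact_pos k
    have hk1 := fact_pos (k+1)
    rw [hs, fact_succ_cast k, pow_succ]
    push_cast
    field_simp
    ring
  rw [tsum_congr hterm, tsum_mul_left]
  exact le_of_eq rfl

lemma hasDerivAt_prod (a r : ℝ) :
    HasDerivAt (fun s : ℝ => (s:ℂ) * ((besselI1 (a*s) : ℝ) : ℂ))
      (((a*r*besselI0 (a*r) : ℝ) : ℂ)) r := by
  have h1 : HasDerivAt (fun s : ℝ => ((s:ℝ):ℂ)) 1 r := by
    simpa using (hasDerivAt_id r).ofReal_comp
  have h3 := h1.mul (hasDerivAt_comp_complex a r)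
  refine h3.congr_deriv ?_
  have hidc : ((besselI1 (a*r):ℝ):ℂ) + ((a*r:ℝ):ℂ)*((I1d (a*r):ℝ):ℂ)
      = ((a*r:ℝ):ℂ)*((besselI0 (a*r):ℝ):ℂ) := by
    exact_mod_cast congrArg (Complex.ofReal) (id1 (a*r))
  push_cast
  push_cast at hidc
  linear_combination hidc

lemma a_mul_max {a : ℝ} (ha : 0 < a) : a * max 1 a⁻¹ = max 1 a := by
  rcases le_total a 1 with h|h
  · rw [max_eq_right (by simpa using one_le_one_div ha h), max_eq_left h,
      mul_inv_cancel₀ (ne_of_gt ha)]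
  · rw [max_eq_left (inv_le_one_of_one_le₀ h), max_eq_right h, mul_one]

theorem stmt_17 :
    ∃ C : ℝ, 0 < C ∧
      ∀ ξ : ℝ, ξ ≠ 0 →
        ((∫ r in Ioo (0 : ℝ) 1, ‖(besselI1 (|ξ| * r) : ℂ)‖ ^ 2 * r)
            ≤ C * min 1 |ξ|⁻¹ * (besselI1 |ξ|) ^ 2)
        ∧ ((∫ r in Ioo (0 : ℝ) 1,
              ‖deriv (fun s : ℝ => (s : ℂ) * (besselI1 (|ξ| * s) : ℂ)) r‖ ^ 2 / r)
            ≤ C * max 1 |ξ| * (besselI1 |ξ|) ^ 2)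
        ∧ ((∫ r in Ioo (0 : ℝ) 1, ‖Lop (fun s : ℝ => (besselI1 (|ξ| * s) : ℂ)) r‖ ^ 2 * r)
            ≤ C * min 1 |ξ|⁻¹ * ξ ^ 4 * (besselI1 |ξ|) ^ 2)
        ∧ ((∫ r in Ioo (0 : ℝ) 1,
              ‖deriv (fun s : ℝ => (s : ℂ) * Lop (fun t : ℝ => (besselI1 (|ξ| * t) : ℂ)) s) r‖ ^ 2 / r)
            ≤ C * max 1 |ξ| * ξ ^ 4 * (besselI1 |ξ|) ^ 2) := by
  refine ⟨4, by norm_num, ?_⟩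
  intro ξ hξ
  set a := |ξ| with haabs
  have ha : 0 < a := abs_pos.2 hξ
  have hI1a : 0 ≤ besselI1 a := besselI1_nonneg ha.le
  have hI0a : 0 ≤ besselI0 a := besselI0_nonneg ha.le
  have hmin0 : 0 ≤ min 1 a⁻¹ := le_min (by norm_num) (by positivity)
  have hmax1 : (1:ℝ) ≤ max 1 a := le_max_left _ _
  have hxi4 : a^4 = ξ^4 := by
    rw [haabs, ← abs_pow]
    exact abs_of_nonneg (by positivity)
  have hc1 : Continuous (fun r : ℝ => besselI1 (a*r) * r) :=
    (continuous_besselI1.comp (continuous_const.mul continuous_id)).mul continuous_id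
  have hc0 : Continuous (fun r : ℝ => besselI0 (a*r) * r) :=
    (continuous_besselI0.comp (continuous_const.mul continuous_id)).mul continuous_id
  have harn : ∀ r : ℝ, r ∈ Ioo (0:ℝ) 1 → 0 ≤ a * r := fun r hr => by nlinarith [hr.1]
  have hI1m : ∀ r : ℝ, r ∈ Ioo (0:ℝ) 1 → besselI1 (a*r) ≤ besselI1 a := by
    intro r hr
    exact besselI1_mono (harn r hr) (by nlinarith [hr.2, hr.1])
  have hI0m : ∀ r : ℝ, r ∈ Ioo (0:ℝ) 1 → besselI0 (a*r) ≤ besselI0 a := by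
    intro r hr
    exact besselI0_mono (harn r hr) (by nlinarith [hr.2, hr.1])
  -- derivative formula for r * I1
  have hderiv2 : ∀ r : ℝ, deriv (fun s : ℝ => (s : ℂ) * (besselI1 (a * s) : ℂ)) r
      = ((a*r*besselI0 (a*r) : ℝ) : ℂ) := fun r => (hasDerivAt_prod a r).deriv
  -- item (i)
  have key1 : (∫ r in Ioo (0 : ℝ) 1, ‖(besselI1 (a * r) : ℂ)‖ ^ 2 * r)
      ≤ besselI1 a * (min 1 a⁻¹ * (2 * besselI1 a)) := by
    have hg : IntegrableOn (fun r : ℝ => besselI1 a * (besselI1 (a*r) * r)) (Ioo (0:ℝ) 1) volume :=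
      integrableOn_cont (continuous_const.mul hc1)
    have step := integral_mono_of_nonneg (f := fun r : ℝ => ‖(besselI1 (a * r) : ℂ)‖ ^ 2 * r)
      (g := fun r : ℝ => besselI1 a * (besselI1 (a*r) * r)) (μ := volume.restrict (Ioo 0 1))
      ?_ hg ?_
    · refine step.trans ?_
      rw [MeasureTheory.integral_const_mul]
      exact mul_le_mul_of_nonneg_left (intI1_le ha) hI1a
    · filter_upwards [self_mem_ae_restrict measurableSet_Ioo] with r hr
      exact mul_nonneg (by positivity) hr.1.le
    · filter_upwards [self_mem_ae_restrict measurableSet_Ioo] with r hr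
      rw [Complex.norm_real, Real.norm_eq_abs, sq_abs]
      have h7 := besselI1_nonneg (harn r hr)
      nlinarith [mul_le_mul_of_nonneg_right (hI1m r hr) (mul_nonneg h7 hr.1.le)]
  -- item (ii)
  have key2 : (∫ r in Ioo (0 : ℝ) 1,
        ‖deriv (fun s : ℝ => (s : ℂ) * (besselI1 (a * s) : ℂ)) r‖ ^ 2 / r)
      ≤ a^2 * besselI0 a * (a⁻¹ * besselI1 a) := by
    have hg : IntegrableOn (fun r : ℝ => a^2 * besselI0 a * (besselI0 (a*r) * r)) (Ioo (0:ℝ) 1) volume :=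
      integrableOn_cont (continuous_const.mul hc0)
    have step := integral_mono_of_nonneg
      (f := fun r : ℝ => ‖deriv (fun s : ℝ => (s : ℂ) * (besselI1 (a * s) : ℂ)) r‖ ^ 2 / r)
      (g := fun r : ℝ => a^2 * besselI0 a * (besselI0 (a*r) * r)) (μ := volume.restrict (Ioo 0 1))
      ?_ hg ?_
    · refine step.trans ?_
      rw [MeasureTheory.integral_const_mul]
      exact mul_le_mul_of_nonneg_left (intI0_le ha) (by positivity)
    · filter_upwards [self_mem_ae_restrict measurableSet_Ioo] with r hr
      exact div_nonneg (by positivity) hr.1.le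
    · filter_upwards [self_mem_ae_restrict measurableSet_Ioo] with r hr
      rw [hderiv2 r, Complex.norm_real, Real.norm_eq_abs, sq_abs,
        div_le_iff₀ hr.1]
      have h6 := besselI0_nonneg (harn r hr)
      nlinarith [hI0m r hr, hr.1.le, mul_le_mul_of_nonneg_left (hI0m r hr)
        (mul_nonneg (mul_nonneg (sq_nonneg a) (sq_nonneg r)) h6)]
  -- item (iii)
  have key3 : (∫ r in Ioo (0 : ℝ) 1, ‖Lop (fun s : ℝ => (besselI1 (a * s) : ℂ)) r‖ ^ 2 * r)
      ≤ a^4 * besselI1 a * (min 1 a⁻¹ * (2 * besselI1 a)) := by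
    have hg : IntegrableOn (fun r : ℝ => a^4 * besselI1 a * (besselI1 (a*r) * r)) (Ioo (0:ℝ) 1) volume :=
      integrableOn_cont (continuous_const.mul hc1)
    have step := integral_mono_of_nonneg
      (f := fun r : ℝ => ‖Lop (fun s : ℝ => (besselI1 (a * s) : ℂ)) r‖ ^ 2 * r)
      (g := fun r : ℝ => a^4 * besselI1 a * (besselI1 (a*r) * r)) (μ := volume.restrict (Ioo 0 1))
      ?_ hg ?_
    · refine step.trans ?_
      rw [MeasureTheory.integral_const_mul]
      exact mul_le_mul_of_nonneg_left (intI1_le ha) (by positivity)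
    · filter_upwards [self_mem_ae_restrict measurableSet_Ioo] with r hr
      exact mul_nonneg (by positivity) hr.1.le
    · filter_upwards [self_mem_ae_restrict measurableSet_Ioo] with r hr
      rw [Lop_eq a (ne_of_gt hr.1), Complex.norm_real, Real.norm_eq_abs, sq_abs]
      have h7 := besselI1_nonneg (harn r hr)
      nlinarith [hI1m r hr, hr.1.le, mul_le_mul_of_nonneg_left (hI1m r hr)
        (mul_nonneg (mul_nonneg (pow_nonneg ha.le 4) h7) hr.1.le)]
  -- item (iv)
  have key4 : (∫ r in Ioo (0 : ℝ) 1,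
        ‖deriv (fun s : ℝ => (s : ℂ) * Lop (fun t : ℝ => (besselI1 (a * t) : ℂ)) s) r‖ ^ 2 / r)
      ≤ a^6 * besselI0 a * (a⁻¹ * besselI1 a) := by
    have hg : IntegrableOn (fun r : ℝ => a^6 * besselI0 a * (besselI0 (a*r) * r)) (Ioo (0:ℝ) 1) volume :=
      integrableOn_cont (continuous_const.mul hc0)
    have hd4 : ∀ r : ℝ, r ∈ Ioo (0:ℝ) 1 →
        deriv (fun s : ℝ => (s : ℂ) * Lop (fun t : ℝ => (besselI1 (a * t) : ℂ)) s) r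
          = ((a^2*(a*r*besselI0 (a*r)) : ℝ) : ℂ) := by
      intro r hr
      have heq : (fun s : ℝ => (s : ℂ) * Lop (fun t : ℝ => (besselI1 (a * t) : ℂ)) s)
          =ᶠ[nhds r] (fun s : ℝ => ((a^2:ℝ):ℂ) * ((s:ℂ) * (besselI1 (a*s) : ℂ))) := by
        filter_upwards [isOpen_Ioi.mem_nhds (show r ∈ Ioi (0:ℝ) from hr.1)] with s hs
        rw [Lop_eq a (ne_of_gt hs)]
        push_cast
        ring
      rw [heq.deriv_eq, ((hasDerivAt_prod a r).const_mul ((a^2:ℝ):ℂ)).deriv]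
      push_cast
      ring
    have step := integral_mono_of_nonneg
      (f := fun r : ℝ => ‖deriv (fun s : ℝ => (s : ℂ) * Lop (fun t : ℝ => (besselI1 (a * t) : ℂ)) s) r‖ ^ 2 / r)
      (g := fun r : ℝ => a^6 * besselI0 a * (besselI0 (a*r) * r)) (μ := volume.restrict (Ioo 0 1))
      ?_ hg ?_
    · refine step.trans ?_
      rw [MeasureTheory.integral_const_mul]
      exact mul_le_mul_of_nonneg_left (intI0_le ha) (by positivity)
    · filter_upwards [self_mem_ae_restrict measurableSet_Ioo] with r hr
      exact div_nonneg (by positivity) hr.1.le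
    · filter_upwards [self_mem_ae_restrict measurableSet_Ioo] with r hr
      rw [hd4 r hr, Complex.norm_real, Real.norm_eq_abs, sq_abs, div_le_iff₀ hr.1]
      have h6 := besselI0_nonneg (harn r hr)
      nlinarith [hI0m r hr, hr.1.le, mul_le_mul_of_nonneg_left (hI0m r hr)
        (mul_nonneg (mul_nonneg (pow_nonneg ha.le 6) (sq_nonneg r)) h6)]
  have hswap := a_mul_max ha
  have hb0 := besselI0_le ha
  have hImax : besselI0 a * a ≤ max 1 a * (4 * besselI1 a) := by
    have h8 := mul_le_mul_of_nonneg_right hb0 ha.le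
    calc besselI0 a * a ≤ 4 * max 1 a⁻¹ * besselI1 a * a := h8
      _ = (a * max 1 a⁻¹) * (4 * besselI1 a) := by ring
      _ = max 1 a * (4 * besselI1 a) := by rw [hswap]
  refine ⟨?_, ?_, ?_, ?_⟩
  · refine key1.trans ?_
    nlinarith [mul_nonneg hmin0 (sq_nonneg (besselI1 a))]
  · refine key2.trans ?_
    have e : a^2 * besselI0 a * (a⁻¹ * besselI1 a) = (besselI0 a * a) * besselI1 a := by
      field_simp
    rw [e]
    calc (besselI0 a * a) * besselI1 a ≤ (max 1 a * (4 * besselI1 a)) * besselI1 a :=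
          mul_le_mul_of_nonneg_right hImax hI1a
      _ = 4 * max 1 a * besselI1 a ^ 2 := by ring
  · refine key3.trans ?_
    rw [← hxi4]
    nlinarith [mul_nonneg (mul_nonneg hmin0 (pow_nonneg ha.le 4)) (sq_nonneg (besselI1 a))]
  · refine key4.trans ?_
    rw [← hxi4]
    have e : a^6 * besselI0 a * (a⁻¹ * besselI1 a) = a^4 * ((besselI0 a * a) * besselI1 a) := by
      field_simp
    rw [e]
    calc a^4 * ((besselI0 a * a) * besselI1 a)
        ≤ a^4 * ((max 1 a * (4 * besselI1 a)) * besselI1 a) := by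
          apply mul_le_mul_of_nonneg_left _ (by positivity)
          exact mul_le_mul_of_nonneg_right hImax hI1a
      _ = 4 * max 1 a * a^4 * besselI1 a ^ 2 := by ring
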